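/- Let Q = Q(N,(m_i),(X_i)) be the quandle of the construction and let g be any quandle homomorphism from Q to an involutory quandle. Then: (a) for every i ∈ I, x ∈ Q_i and n ∈ N, g(x + (1−t²)·n + X_i) = g(x); and (b) for every k ∈ I, x ∈ Q_k, all i, j ∈ I, and every integer p, g(x + p·(1+t)·(m_j − m_i) + X_k) = g(x). -/

import Mathlib

open LaurentPolynomial

set_option synthInstance.maxHeartbeats 1000000
set_option maxHeartbeats 1000000

noncomputable section

/-- The ring `Λ = ℤ[t,t⁻¹]` of Laurent polynomials with integer coefficients. -/
abbrev Λ : Type := LaurentPolynomial ℤ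

/-- The variable `t ∈ Λ`. -/
abbrev tL : Λ := T 1

/-- A medial quandle structure on a type `Q`: an idempotent binary operation whose right
translations are bijections, satisfying the medial law. -/
structure MedialQuandleStr (Q : Type*) where
  op : Q → Q → Q
  idem : ∀ x, op x x = x
  bij : ∀ y, Function.Bijective fun x => op x y
  medial : ∀ w x y z, op (op w x) (op y z) = op (op w y) (op x z)

/-- A quandle structure on a type `T`. -/
structure QuandleStr (T : Type*) where
  op : T → T → T
  idem : ∀ x, op x x = x
  bij : ∀ y, Function.Bijective fun x => op x y
  distrib : ∀ x y z, op (op x y) z = op (op x z) (op y z)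

namespace MedialQuandleStr

variable {Q : Type*} (s : MedialQuandleStr Q)

/-- The translation `β_y : x ↦ x ▷ y`, as a permutation of `Q`. -/
def β (y : Q) : Equiv.Perm Q := Equiv.ofBijective _ (s.bij y)

/-- `β(Q)`: the subgroup of permutations generated by the translations. -/
def transGroup : Subgroup (Equiv.Perm Q) := Subgroup.closure (Set.range s.β)

/-- The displacement group `Dis(Q)`, generated by the elementary displacements
`β_y β_z⁻¹`. -/
def Dis : Subgroup (Equiv.Perm Q) :=
  Subgroup.closure {d : Equiv.Perm Q | ∃ y z, d = s.β y * (s.β z)⁻¹}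

/-- The orbit of `q`: the smallest subset of `Q` containing `q` and closed under the
action of `β(Q)`. -/
def orbit (q : Q) : Set Q := {x | ∃ g ∈ s.transGroup, g q = x}

end MedialQuandleStr

section Construction

variable {M : Type*} [AddCommGroup M] [Module Λ M] {I : Type*}

/-- The carrier of the quandle `Q(N,(m_i),(X_i))`: the disjoint union of the quotients
`Q_i = N/X_i`. -/
def QCar (N : Submodule Λ M) (X : I → Submodule Λ ↥N) : Type _ :=
  Σ i : I, ↥N ⧸ X i

/-- The condition `(1-t)·X_i = 0` for all `i`. -/
def annCond (N : Submodule Λ M) (X : I → Submodule Λ ↥N) : Prop :=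
  ∀ i, ∀ x ∈ X i, (1 - tL) • (x : ↥N) = 0

/-- Multiplication by `1-t`, descended from `N/X_j` to `N` (well defined since
`(1-t)·X_j = 0`). -/
def oneSubT (N : Submodule Λ M) {X : I → Submodule Λ ↥N} (h : annCond N X) (j : I) :
    (↥N ⧸ X j) →ₗ[Λ] ↥N :=
  Submodule.liftQ (X j) ((1 - tL) • (LinearMap.id : ↥N →ₗ[Λ] ↥N))
    (fun x hx => by simpa using h j x hx)

/-- The operation of `Q(N,(m_i),(X_i))`: for `x ∈ Q_i` and `y ∈ Q_j`,
`x ▷ y = m_j - m_i + t·x + (1-t)·y + X_i ∈ Q_i`. -/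
def qop (N : Submodule Λ M) (m : I → M) {X : I → Submodule Λ ↥N}
    (hm : ∀ i j, m i - m j ∈ N) (h : annCond N X) :
    QCar N X → QCar N X → QCar N X :=
  fun x y =>
    ⟨x.1, Submodule.Quotient.mk (⟨m y.1 - m x.1, hm y.1 x.1⟩ : ↥N)
        + tL • x.2 + Submodule.Quotient.mk (oneSubT N h y.1 y.2)⟩

end Construction

/-- Let `Q = Q(N,(m_i),(X_i))` and let `g` be any quandle
homomorphism from `Q` to an involutory quandle. Then (a) `g(x + (1-t²)·n + X_i) = g(x)`
for every `i ∈ I`, `x ∈ Q_i` and `n ∈ N`; and (b)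
`g(x + p·(1+t)·(m_j - m_i) + X_k) = g(x)` for every `k ∈ I`, `x ∈ Q_k`, `i, j ∈ I`
and every integer `p`. -/
theorem stmt17 {M : Type*} [AddCommGroup M] [Module Λ M] {I : Type*} [Nonempty I]
    (N : Submodule Λ M) (m : I → M) (X : I → Submodule Λ ↥N)
    (hm : ∀ i j, m i - m j ∈ N) (h : annCond N X)
    {T' : Type*} (qt : QuandleStr T') (hinv : ∀ a b : T', qt.op (qt.op a b) b = a)
    (g : QCar N X → T')
    (hg : ∀ x y, g (qop N m hm h x y) = qt.op (g x) (g y)) :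
    (∀ (i : I) (x : ↥N ⧸ X i) (n : ↥N),
      g ⟨i, x + Submodule.Quotient.mk ((1 - tL ^ 2) • n)⟩ = g ⟨i, x⟩) ∧
    (∀ (k : I) (x : ↥N ⧸ X k) (i j : I) (p : ℤ),
      g ⟨k, x + Submodule.Quotient.mk
          (p • ((1 + tL) • (⟨m j - m i, hm j i⟩ : ↥N)))⟩ = g ⟨k, x⟩) := by
  classical
  -- The key computation: applying the operation twice with `y = ⟨j, mk n⟩`.
  have key : ∀ (k j : I) (x : ↥N ⧸ X k) (n : ↥N),
      g ⟨k, (1 + tL) • (Submodule.Quotient.mk (⟨m j - m k, hm j k⟩ : ↥N) : ↥N ⧸ X k)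
          + (tL ^ 2) • x + Submodule.Quotient.mk ((1 - tL ^ 2) • n)⟩ = g ⟨k, x⟩ := by
    intro k j x n
    have e2 : ((1 + tL) • (Submodule.Quotient.mk (⟨m j - m k, hm j k⟩ : ↥N) : ↥N ⧸ X k)
          + (tL ^ 2) • x + Submodule.Quotient.mk ((1 - tL ^ 2) • n))
        = (Submodule.Quotient.mk (⟨m j - m k, hm j k⟩ : ↥N)
            + tL • (Submodule.Quotient.mk (⟨m j - m k, hm j k⟩ : ↥N) + tL • x
                + Submodule.Quotient.mk (oneSubT N h j (Submodule.Quotient.mk n)))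
            + Submodule.Quotient.mk (oneSubT N h j (Submodule.Quotient.mk n))) := by
      have ho : oneSubT N h j (Submodule.Quotient.mk n) = (1 - tL) • n := by
        simp [oneSubT]
      rw [ho]
      rw [Submodule.Quotient.mk_smul, Submodule.Quotient.mk_smul]
      set a : ↥N ⧸ X k := Submodule.Quotient.mk (⟨m j - m k, hm j k⟩ : ↥N)
      set b : ↥N ⧸ X k := Submodule.Quotient.mk n
      module
    have e : (⟨k, (1 + tL) • (Submodule.Quotient.mk (⟨m j - m k, hm j k⟩ : ↥N) : ↥N ⧸ X k)
          + (tL ^ 2) • x + Submodule.Quotient.mk ((1 - tL ^ 2) • n)⟩ : QCar N X)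
        = qop N m hm h (qop N m hm h ⟨k, x⟩ ⟨j, Submodule.Quotient.mk n⟩)
            ⟨j, Submodule.Quotient.mk n⟩ := by
      exact congrArg (fun z => (⟨k, z⟩ : QCar N X)) e2
    rw [e]
    exact (hg _ _).trans ((congrArg (fun z => qt.op z _) (hg _ _)).trans (hinv _ _))
  -- `t²` is invertible
  have hts : ∀ (k : I) (y : ↥N ⧸ X k), (tL ^ 2) • ((T (-2) : Λ) • y) = y := by
    intro k y
    have ht : (tL ^ 2 : Λ) * T (-2) = 1 := by
      show (T 1 : Λ) ^ 2 * T (-2) = 1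
      rw [T_pow, ← T_add]
      norm_num
    rw [smul_smul, ht, one_smul]
  -- the `m j - m k` with `j = k` class is zero
  have hz : ∀ k : I, (Submodule.Quotient.mk (⟨m k - m k, hm k k⟩ : ↥N) : ↥N ⧸ X k) = 0 := by
    intro k
    have : (⟨m k - m k, hm k k⟩ : ↥N) = 0 := by
      ext
      simp
    rw [this, Submodule.Quotient.mk_zero]
  -- Part (a)
  have partA : ∀ (k : I) (x : ↥N ⧸ X k) (n : ↥N),
      g ⟨k, x + Submodule.Quotient.mk ((1 - tL ^ 2) • n)⟩ = g ⟨k, x⟩ := by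
    intro k x n
    have h1 := key k k ((T (-2) : Λ) • x) n
    have h2 := key k k ((T (-2) : Λ) • x) 0
    rw [hz, smul_zero, zero_add, hts] at h1 h2
    rw [smul_zero, Submodule.Quotient.mk_zero, add_zero] at h2
    exact h1.trans h2.symm
  refine ⟨partA, ?_⟩
  intro k x i j p
  -- notation
  set a : ↥N ⧸ X k := Submodule.Quotient.mk (⟨m j - m k, hm j k⟩ : ↥N) with ha
  set b : ↥N ⧸ X k := Submodule.Quotient.mk (⟨m i - m k, hm i k⟩ : ↥N) with hb
  set d : ↥N ⧸ X k := Submodule.Quotient.mk (⟨m j - m i, hm j i⟩ : ↥N) with hd0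
  have hd : d = a - b := by
    rw [ha, hb, hd0, ← Submodule.Quotient.mk_sub]
    congr 1
    ext
    simp
  have keyJ : ∀ u : ↥N ⧸ X k, g ⟨k, (1 + tL) • a + (tL ^ 2) • u⟩ = g ⟨k, u⟩ := by
    intro u
    have := key k j u 0
    rwa [smul_zero, Submodule.Quotient.mk_zero, add_zero] at this
  have keyI : ∀ u : ↥N ⧸ X k, g ⟨k, (1 + tL) • b + (tL ^ 2) • u⟩ = g ⟨k, u⟩ := by
    intro u
    have := key k i u 0
    rwa [smul_zero, Submodule.Quotient.mk_zero, add_zero] at this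
  -- one step
  have B1 : ∀ x : ↥N ⧸ X k, g ⟨k, x + (1 + tL) • d⟩ = g ⟨k, x⟩ := by
    intro x
    set u : ↥N ⧸ X k := (T (-2) : Λ) • (x - (1 + tL) • b) with hu
    have hFi : (1 + tL) • b + (tL ^ 2) • u = x := by
      rw [hu, hts]
      abel
    have hFj : (1 + tL) • a + (tL ^ 2) • u = x + (1 + tL) • d := by
      rw [hu, hts, hd]
      module
    calc g ⟨k, x + (1 + tL) • d⟩ = g ⟨k, u⟩ := by rw [← hFj]; exact keyJ u
      _ = g ⟨k, x⟩ := by rw [← (keyI u), hFi]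
  -- integer iteration
  have Bp : ∀ (p : ℤ) (x : ↥N ⧸ X k), g ⟨k, x + p • ((1 + tL) • d)⟩ = g ⟨k, x⟩ := by
    intro p
    induction p using Int.induction_on with
    | zero => intro x; simp
    | succ q ih =>
      intro x
      have e : x + ((q : ℤ) + 1) • ((1 + tL) • d) = (x + (1 + tL) • d) + (q : ℤ) • ((1 + tL) • d) := by
        rw [add_smul, one_smul]
        abel
      rw [e, ih (x + (1 + tL) • d), B1]
    | pred q ih =>
      intro x
      have e : x + (-(q : ℤ) - 1) • ((1 + tL) • d) = (x - (1 + tL) • d) + (-(q : ℤ)) • ((1 + tL) • d) := by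
        rw [sub_smul, one_smul]
        abel
      rw [e, ih (x - (1 + tL) • d)]
      have := B1 (x - (1 + tL) • d)
      rw [sub_add_cancel] at this
      exact this.symm
  have hmk : (Submodule.Quotient.mk (p • ((1 + tL) • (⟨m j - m i, hm j i⟩ : ↥N))) : ↥N ⧸ X k)
      = p • ((1 + tL) • d) := by
    rw [hd0]
    rw [show (Submodule.Quotient.mk : ↥N → ↥N ⧸ X k) = (Submodule.mkQ (X k) : ↥N → ↥N ⧸ X k) from rfl]
    rw [map_zsmul, map_smul]
  rw [hmk]
  exact Bp p x
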